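/- arXiv:2206.10217 — 2 statements merged into one kernel-verified Lean document; each statement's English description precedes it below -/
import Mathlib

section
/- For every N ≥ 1, every continuous function H : ℝ^N → ℝ, every β > 0, every m ∈ ℝ^N with ‖m‖₂² ≤ N, every δ, ε > 0, and every integer k ≥ 1: (1/N) log ∫_{Band(m,δ)} e^{β H(σ)} μ_N(dσ) ≥ (β/N) H(m) + (1/(kN)) log ∫_{Band_k(m,δ,ε)} exp( β Σ_{i=1}^k ( H(σ^i) − H(m) ) ) μ_N^{⊗k}(dσ¹ ⋯ dσ^k). -/
open MeasureTheory ProbabilityTheory Filter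
open scoped ENNReal NNReal

noncomputable section

/-- Euclidean dot product on `ℝ^N`. -/
def dotp {N : ℕ} (σ τ : Fin N → ℝ) : ℝ := ∑ i, σ i * τ i

/-- The sphere `S_N = {σ : ‖σ‖₂² = N}`. -/
def sphereSet (N : ℕ) : Set (Fin N → ℝ) := {σ | ∑ i, (σ i) ^ 2 = (N : ℝ)}

/-- The mixture `ξ(x) = Σ_{k=2}^P c_k² x^k`. -/
def xiFun (P : ℕ) (c : ℕ → ℝ) (x : ℝ) : ℝ := ∑ k ∈ Finset.Icc 2 P, (c k) ^ 2 * x ^ k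

/-- `ξ'`. -/
def xiD1 (P : ℕ) (c : ℕ → ℝ) (x : ℝ) : ℝ :=
  ∑ k ∈ Finset.Icc 2 P, (k : ℝ) * (c k) ^ 2 * x ^ (k - 1)

/-- `ξ''`. -/
def xiD2 (P : ℕ) (c : ℕ → ℝ) (x : ℝ) : ℝ :=
  ∑ k ∈ Finset.Icc 2 P, (k : ℝ) * ((k : ℝ) - 1) * (c k) ^ 2 * x ^ (k - 2)

/-- The mixed p-spin Hamiltonian built from couplings `g`. -/
def hamiltonian (N P : ℕ) (c : ℕ → ℝ) (g : (k : ℕ) → (Fin k → Fin N) → ℝ)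
    (σ : Fin N → ℝ) : ℝ :=
  ∑ k ∈ Finset.Icc 2 P, c k * (N : ℝ) ^ (-(((k : ℝ) - 1) / 2)) *
    ∑ j : Fin k → Fin N, g k j * ∏ i, σ (j i)

/-- Index set for the entries of all the coupling tensors. -/
abbrev GIdx (N P : ℕ) : Type := Σ k : {k : ℕ // k ∈ Finset.Icc 2 P}, (Fin (k : ℕ) → Fin N)

/-- Flatten the couplings into a single Gaussian vector. -/
def flatten (N P : ℕ) (g : (k : ℕ) → (Fin k → Fin N) → ℝ) : GIdx N P → ℝ :=
  fun i => g i.1 i.2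

/-- The couplings `(G^{(k)})_{2 ≤ k ≤ P}` are i.i.d. standard Gaussians. -/
def StdGaussianCouplings {Ω : Type*} [MeasureSpace Ω] (N P : ℕ)
    (G : Ω → (k : ℕ) → (Fin k → Fin N) → ℝ) : Prop :=
  Measure.map (fun ω => flatten N P (G ω)) ℙ = Measure.pi fun _ : GIdx N P => gaussianReal 0 1

/-- The maximum of the Hamiltonian over the sphere. -/
def maxH (N P : ℕ) (c : ℕ → ℝ) (g : (k : ℕ) → (Fin k → Fin N) → ℝ) : ℝ :=
  ⨆ σ : sphereSet N, hamiltonian N P c g σ.1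


/-- Euclidean gradient of the Hamiltonian. -/
def gradH (N P : ℕ) (c : ℕ → ℝ) (g : (k : ℕ) → (Fin k → Fin N) → ℝ)
    (σ : Fin N → ℝ) : Fin N → ℝ :=
  fun i => fderiv ℝ (hamiltonian N P c g) σ (Pi.single i 1)

/-- Euclidean Hessian of the Hamiltonian, as a bilinear form. -/
def hessH (N P : ℕ) (c : ℕ → ℝ) (g : (k : ℕ) → (Fin k → Fin N) → ℝ)
    (σ v w : Fin N → ℝ) : ℝ :=
  fderiv ℝ (fun τ => fderiv ℝ (hamiltonian N P c g) τ w) σ v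

/-- `σ` is a spherical critical point: `∇H(σ) = (⟨∇H(σ),σ⟩/N) σ`. -/
def IsCritPt (N P : ℕ) (c : ℕ → ℝ) (g : (k : ℕ) → (Fin k → Fin N) → ℝ)
    (σ : Fin N → ℝ) : Prop :=
  σ ∈ sphereSet N ∧ gradH N P c g σ = (dotp (gradH N P c g σ) σ / N) • σ

/-- Cardinality of a set, valued in `ℝ≥0∞`. -/
def ecount {α : Type*} (s : Set α) : ℝ≥0∞ := ∑' _ : s, 1

/-- Spherical critical points with energy at least `Nη`. -/
def crtSet (N P : ℕ) (c : ℕ → ℝ) (g : (k : ℕ) → (Fin k → Fin N) → ℝ)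
    (η : ℝ) : Set (Fin N → ℝ) :=
  {σ | IsCritPt N P c g σ ∧ (N : ℝ) * η ≤ hamiltonian N P c g σ}

/-- Index (number of negative eigenvalues) of the spherical Hessian quadratic form at `σ`:
maximal dimension of a subspace of the tangent space on which the form is negative definite. -/
def critIndex (N P : ℕ) (c : ℕ → ℝ) (g : (k : ℕ) → (Fin k → Fin N) → ℝ)
    (σ : Fin N → ℝ) : ℕ :=
  sSup {d : ℕ | ∃ W : Submodule ℝ (Fin N → ℝ), Module.finrank ℝ W = d ∧
    (∀ v ∈ W, dotp v σ = 0) ∧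
    ∀ v ∈ W, v ≠ 0 →
      hessH N P c g σ v v - (dotp (gradH N P c g σ) σ / N) * ∑ i, (v i) ^ 2 < 0}

/-- Critical points of index `N-1-k` in the superlevel set. -/
def crtSetIdx (N P : ℕ) (c : ℕ → ℝ) (g : (k : ℕ) → (Fin k → Fin N) → ℝ)
    (η : ℝ) (k : ℕ) : Set (Fin N → ℝ) :=
  {σ | σ ∈ crtSet N P c g η ∧ critIndex N P c g σ = N - 1 - k}

/-- Coefficients of the pure p-spin model. -/
def pureC (p : ℕ) : ℕ → ℝ := fun k => if k = p then 1 else 0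

/-- The uniform probability measure on the sphere `S_N`. -/
def sphereUniform (N : ℕ) : Measure (Fin N → ℝ) :=
  Measure.map (fun g i => Real.sqrt N * g i / Real.sqrt (∑ j, (g j) ^ 2))
    (Measure.pi fun _ : Fin N => gaussianReal 0 1)

/-- The band around `m`. -/
def band (N : ℕ) (m : Fin N → ℝ) (δ : ℝ) : Set (Fin N → ℝ) :=
  {σ | σ ∈ sphereSet N ∧ |dotp (σ - m) m| < N * δ}

/-- `k`-tuples from the band with pairwise overlaps close to `⟨m,m⟩`. -/
def bandK (N k : ℕ) (m : Fin N → ℝ) (δ ε : ℝ) : Set (Fin k → Fin N → ℝ) :=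
  {σs | (∀ i, σs i ∈ band N m δ) ∧
    ∀ i j, i ≠ j → |dotp (σs i) (σs j) - dotp m m| < N * ε}

/-- `∫₀ᵗ γ(s) ds`, valued in `ℝ≥0∞`. -/
def gammaLInt (γ : ℝ → ℝ) (t : ℝ) : ℝ≥0∞ := ∫⁻ s in Set.Ioo 0 t, ENNReal.ofReal (γ s)

/-- The zero-temperature spherical Parisi functional (Crisanti–Sommers form), with the
convention `1/0 = +∞`. -/
def PFunE (P : ℕ) (c : ℕ → ℝ) (γ : ℝ → ℝ) : ℝ≥0∞ :=
  ⨅ L ∈ {L : ℝ | gammaLInt γ 1 ≤ ENNReal.ofReal L},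
    (∫⁻ t in Set.Ioo (0 : ℝ) 1,
      (ENNReal.ofReal (xiD2 P c t * (L - (gammaLInt γ t).toReal))
        + (ENNReal.ofReal (L - (gammaLInt γ t).toReal))⁻¹)) / 2

/-- The space `𝒰` of order parameters: non-decreasing, non-negative, integrable on `[0,1)`. -/
def calU : Set (ℝ → ℝ) :=
  {γ | (∀ t ∈ Set.Ico (0 : ℝ) 1, 0 ≤ γ t) ∧ MonotoneOn γ (Set.Ico 0 1) ∧
    IntegrableOn γ (Set.Ioo 0 1)}

/-- The support of `γ`: points of `[0,1]` near which `γ` is not constant. -/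
def suppGamma (γ : ℝ → ℝ) : Set ℝ :=
  {q | q ∈ Set.Icc (0 : ℝ) 1 ∧ ∀ ε > 0, ∃ s ∈ Set.Ico (0 : ℝ) 1, ∃ t ∈ Set.Ico (0 : ℝ) 1,
    |s - q| < ε ∧ |t - q| < ε ∧ γ s ≠ γ t}

/-- The superlevel set `L_N(η)`. -/
def levelSet (N P : ℕ) (c : ℕ → ℝ) (g : (k : ℕ) → (Fin k → Fin N) → ℝ)
    (η : ℝ) : Set (Fin N → ℝ) :=
  {σ | σ ∈ sphereSet N ∧ (N : ℝ) * η ≤ hamiltonian N P c g σ}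

/-- Threshold energy of the pure p-spin model. -/
def THRp (p : ℕ) : ℝ := 2 * Real.sqrt (((p : ℝ) - 1) / p)

/-- The function `J` of the pure p-spin complexity. -/
def Jp (p : ℕ) (η : ℝ) : ℝ :=
  η / (THRp p) ^ 2 * Real.sqrt (η ^ 2 - (THRp p) ^ 2)
    - Real.log (η + Real.sqrt (η ^ 2 - (THRp p) ^ 2)) + Real.log (THRp p)

/-- The annealed complexity of the pure p-spin spherical model. -/
def SigmaPure (p : ℕ) (η : ℝ) : ℝ :=
  if η ≤ 0 then Real.log ((p : ℝ) - 1) / 2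
  else if η ≤ THRp p then
    Real.log ((p : ℝ) - 1) / 2 - ((p : ℝ) - 2) / (4 * ((p : ℝ) - 1)) * η ^ 2
  else Real.log ((p : ℝ) - 1) / 2 - ((p : ℝ) - 2) / (4 * ((p : ℝ) - 1)) * η ^ 2 - Jp p η

/-- Couplings, unflattened from a vector indexed by `GIdx N P`. -/
def unflatten (N P : ℕ) (g : GIdx N P → ℝ) : (k : ℕ) → (Fin k → Fin N) → ℝ :=
  fun k j => if h : k ∈ Finset.Icc 2 P then g ⟨⟨k, h⟩, j⟩ else 0

/-- `ξ'''`. -/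
def xiD3 (P : ℕ) (c : ℕ → ℝ) (x : ℝ) : ℝ :=
  ∑ k ∈ Finset.Icc 2 P, (k : ℝ) * ((k : ℝ) - 1) * ((k : ℝ) - 2) * (c k) ^ 2 * x ^ (k - 3)



lemma lintegral_pi_prod' {α : Type*} [MeasurableSpace α] (μ : Measure α) [SigmaFinite μ] :
    ∀ (n : ℕ) (f : Fin n → α → ℝ≥0∞), (∀ i, Measurable (f i)) →
      ∫⁻ x : Fin n → α, ∏ i, f i (x i) ∂(Measure.pi fun _ => μ) = ∏ i, ∫⁻ y, f i y ∂μ := by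
  intro n
  induction n with
  | zero =>
      intro f hf
      simp only [Finset.univ_eq_empty, Finset.prod_empty, lintegral_one]
      rw [Measure.pi_univ]
      simp
  | succ n ih =>
      intro f hf
      have h := measurePreserving_piFinSuccAbove (fun _ : Fin (n + 1) => μ) 0
      have hmeas : Measurable fun p : α × (Fin n → α) =>
          f 0 p.1 * ∏ j : Fin n, f j.succ (p.2 j) := by
        refine ((hf 0).comp measurable_fst).mul ?_
        exact Finset.measurable_prod _ fun j _ =>
          (hf j.succ).comp ((measurable_pi_apply j).comp measurable_snd)
      calc ∫⁻ x : Fin (n + 1) → α, ∏ i, f i (x i) ∂(Measure.pi fun _ => μ)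
          = ∫⁻ p : α × (Fin n → α), f 0 p.1 * ∏ j : Fin n, f j.succ (p.2 j)
              ∂(μ.prod (Measure.pi fun _ : Fin n => μ)) := by
            rw [← h.lintegral_comp hmeas]
            refine lintegral_congr fun x => ?_
            simp [MeasurableEquiv.piFinSuccAbove_apply, Fin.zero_succAbove,
              Fin.prod_univ_succ, Fin.tail]
        _ = (∫⁻ y, f 0 y ∂μ) * ∫⁻ x : Fin n → α, ∏ j : Fin n, f j.succ (x j)
              ∂(Measure.pi fun _ : Fin n => μ) :=
            lintegral_prod_mul (hf 0).aemeasurable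
              (Finset.measurable_prod _ fun (j : Fin n) _ =>
                (hf (Fin.succ j)).comp (measurable_pi_apply j)).aemeasurable
        _ = ∏ i, ∫⁻ y, f i y ∂μ := by
            rw [ih (fun j : Fin n => f (Fin.succ j)) (fun j => hf (Fin.succ j)), Fin.prod_univ_succ]


lemma sphereUniform_isProb (N : ℕ) : IsProbabilityMeasure (sphereUniform N) := by
  rw [sphereUniform]
  refine Measure.isProbabilityMeasure_map (Measurable.aemeasurable ?_)
  refine measurable_pi_lambda _ fun i => ?_
  exact ((measurable_const.mul (measurable_pi_apply i)).div
    ((Finset.measurable_sum _ fun j _ => (measurable_pi_apply j).pow_const 2).comp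
      measurable_id |>.sqrt))

instance (N : ℕ) : IsProbabilityMeasure (sphereUniform N) := sphereUniform_isProb N

lemma measurableSet_band (N : ℕ) (m : Fin N → ℝ) (δ : ℝ) : MeasurableSet (band N m δ) := by
  have h1 : Continuous fun σ : Fin N → ℝ => ∑ i, σ i ^ 2 := by
    exact continuous_finset_sum _ fun i _ => (continuous_apply i).pow 2
  have h2 : Continuous fun σ : Fin N → ℝ => |dotp (σ - m) m| := by
    refine Continuous.abs ?_
    unfold dotp
    exact continuous_finset_sum _ fun i _ =>
      (((continuous_apply i).comp (continuous_id.sub continuous_const)).mul continuous_const)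
  have : band N m δ =
      (fun σ : Fin N → ℝ => ∑ i, σ i ^ 2) ⁻¹' {(N : ℝ)} ∩
        (fun σ : Fin N → ℝ => |dotp (σ - m) m|) ⁻¹' Set.Iio (N * δ) := by
    ext σ; simp [band, sphereSet, Set.mem_setOf_eq]
  rw [this]
  exact (h1.measurable (measurableSet_singleton _)).inter (h2.measurable measurableSet_Iio)

/-- the replicated band free energy lower-bounds the band free energy.
Logarithms are taken via `ENNReal.log`, valued in `EReal`, which encodes `log 0 = -∞`. -/
theorem statement_12 (N : ℕ) (hN : 1 ≤ N)
    (H : (Fin N → ℝ) → ℝ) (hH : Continuous H)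
    (β : ℝ) (hβ : 0 < β) (m : Fin N → ℝ) (hm : ∑ i, (m i) ^ 2 ≤ (N : ℝ))
    (δ ε : ℝ) (hδ : 0 < δ) (hε : 0 < ε) (k : ℕ) (hk : 1 ≤ k) :
    ((β * H m / N : ℝ) : EReal)
      + ((1 / (k * N) : ℝ) : EReal) *
        ENNReal.log (∫⁻ σs in bandK N k m δ ε,
          ENNReal.ofReal (Real.exp (β * ∑ i, (H (σs i) - H m)))
            ∂(Measure.pi fun _ : Fin k => sphereUniform N))
    ≤ ((1 / N : ℝ) : EReal) *
        ENNReal.log (∫⁻ σ in band N m δ,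
          ENNReal.ofReal (Real.exp (β * H σ)) ∂(sphereUniform N)) := by
  have hk' : k ≠ 0 := Nat.one_le_iff_ne_zero.mp hk
  have hN0 : (0:ℝ) < N := by exact_mod_cast hN
  have hk0 : (0:ℝ) < k := by exact_mod_cast hk
  set μ := sphereUniform N with hμ
  set f : (Fin N → ℝ) → ℝ≥0∞ := fun σ => ENNReal.ofReal (Real.exp (β * (H σ - H m))) with hfdef
  have hfm : Measurable f :=
    ENNReal.measurable_ofReal.comp
      (Real.continuous_exp.comp (continuous_const.mul (hH.sub continuous_const))).measurable
  set a : ℝ≥0∞ := ENNReal.ofReal (Real.exp (-(β * H m))) with ha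
  set I := ∫⁻ σ in band N m δ, ENNReal.ofReal (Real.exp (β * H σ)) ∂μ with hIdef
  set J := ∫⁻ σs in bandK N k m δ ε,
      ENNReal.ofReal (Real.exp (β * ∑ i, (H (σs i) - H m)))
      ∂(Measure.pi fun _ : Fin k => μ) with hJdef
  have hband : MeasurableSet (band N m δ) := measurableSet_band N m δ
  have hprod : ∀ σs : Fin k → Fin N → ℝ,
      ENNReal.ofReal (Real.exp (β * ∑ i, (H (σs i) - H m))) = ∏ i, f (σs i) := by
    intro σs
    rw [Finset.mul_sum, Real.exp_sum,
      ENNReal.ofReal_prod_of_nonneg (fun i _ => (Real.exp_pos _).le)]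
  have hsub : bandK N k m δ ε ⊆ Set.pi Set.univ fun _ : Fin k => band N m δ := by
    intro σs hσs i _
    exact hσs.1 i
  have hJle : J ≤ (I * a) ^ k := by
    calc J ≤ ∫⁻ σs in Set.pi Set.univ fun _ : Fin k => band N m δ,
            ENNReal.ofReal (Real.exp (β * ∑ i, (H (σs i) - H m)))
            ∂(Measure.pi fun _ : Fin k => μ) := lintegral_mono_set hsub
      _ = ∫⁻ σs, (Set.pi Set.univ fun _ : Fin k => band N m δ).indicator
            (fun σs => ENNReal.ofReal (Real.exp (β * ∑ i, (H (σs i) - H m)))) σs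
            ∂(Measure.pi fun _ : Fin k => μ) :=
          (lintegral_indicator (MeasurableSet.univ_pi fun _ => hband) _).symm
      _ = ∫⁻ σs, ∏ i, (band N m δ).indicator f (σs i) ∂(Measure.pi fun _ : Fin k => μ) := by
          refine lintegral_congr fun σs => ?_
          by_cases h : σs ∈ Set.pi Set.univ fun _ : Fin k => band N m δ
          · rw [Set.indicator_of_mem h, hprod]
            exact Finset.prod_congr rfl fun i _ =>
              (Set.indicator_of_mem (h i (Set.mem_univ i)) f).symm
          · rw [Set.indicator_of_notMem h]
            obtain ⟨i, hi⟩ : ∃ i, σs i ∉ band N m δ := by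
              simpa [Set.mem_pi] using h
            exact (Finset.prod_eq_zero (Finset.mem_univ i)
              (Set.indicator_of_notMem hi f)).symm
      _ = ∏ _i : Fin k, ∫⁻ σ, (band N m δ).indicator f σ ∂μ :=
          lintegral_pi_prod' μ k _ (fun _ => hfm.indicator hband)
      _ = (∫⁻ σ in band N m δ, f σ ∂μ) ^ k := by
          rw [Finset.prod_const, Finset.card_univ, Fintype.card_fin,
            lintegral_indicator hband _]
      _ = (I * a) ^ k := by
          congr 1
          calc ∫⁻ σ in band N m δ, f σ ∂μ
              = ∫⁻ σ in band N m δ, ENNReal.ofReal (Real.exp (β * H σ)) * a ∂μ := by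
                refine lintegral_congr fun σ => ?_
                have hb : β * (H σ - H m) = β * H σ + -(β * H m) := by ring
                rw [hfdef]
                simp only []
                rw [hb, Real.exp_add, ENNReal.ofReal_mul (Real.exp_pos _).le]
            _ = I * a := lintegral_mul_const' a _ ENNReal.ofReal_ne_top
  by_cases hJ0 : J = 0
  · rw [hJ0, ENNReal.log_zero]
    have hr : (0 : EReal) < ((1 / (k * N) : ℝ) : EReal) := by
      exact_mod_cast (by positivity : (0:ℝ) < 1 / (k * N))
    rw [EReal.mul_bot_of_pos hr, EReal.add_bot]
    exact bot_le
  by_cases hItop : I = ⊤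
  · rw [hItop, ENNReal.log_top]
    have hr : (0 : EReal) < ((1 / N : ℝ) : EReal) := by
      exact_mod_cast (by positivity : (0:ℝ) < 1 / N)
    rw [EReal.mul_top_of_pos hr]
    exact le_top
  have hane : a ≠ ⊤ := ENNReal.ofReal_ne_top
  have hIane : I * a ≠ ⊤ := ENNReal.mul_ne_top hItop hane
  have hJtop : J ≠ ⊤ := ne_top_of_le_ne_top (ENNReal.pow_ne_top hIane) hJle
  have hI0 : I ≠ 0 := by
    intro h0
    apply hJ0
    refine le_antisymm ?_ zero_le
    rw [h0, zero_mul, zero_pow hk'] at hJle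
    exact hJle
  have hloga : ENNReal.log a = ((-(β * H m) : ℝ) : EReal) := by
    rw [ha, ENNReal.log_ofReal_of_pos (Real.exp_pos _), Real.log_exp]
  have hlog := ENNReal.log_monotone hJle
  rw [ENNReal.log_pow, ENNReal.log_mul_add, hloga] at hlog
  obtain ⟨lI, hlI⟩ : ∃ x : ℝ, ENNReal.log I = (x : EReal) :=
    ⟨_, (EReal.coe_toReal (by simpa using hItop) (by simpa using hI0)).symm⟩
  obtain ⟨lJ, hlJ⟩ : ∃ x : ℝ, ENNReal.log J = (x : EReal) :=
    ⟨_, (EReal.coe_toReal (by simpa using hJtop) (by simpa using hJ0)).symm⟩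
  rw [hlI, hlJ] at hlog ⊢
  rw [← EReal.coe_coe_eq_natCast k] at hlog
  have hreal : lJ ≤ (k : ℝ) * (lI + -(β * H m)) := by exact_mod_cast hlog
  have hfin : β * H m / N + 1 / (k * N) * lJ ≤ 1 / N * lI := by
    have h2 : 1 / (k * N) * lJ ≤ 1 / (k * N) * ((k : ℝ) * (lI + -(β * H m))) :=
      mul_le_mul_of_nonneg_left hreal (by positivity)
    have h3 : 1 / (↑k * ↑N) * ((k : ℝ) * (lI + -(β * H m))) = 1 / N * lI - β * H m / N := by
      field_simp
      ring
    linarith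
  exact_mod_cast hfin
end
end

section
/- Let ξ(x) = Σ_{k=2}^P c_k² x^k with (c_k) not all zero, and let ℒ be the set of measurable functions γ : [0,1) → [0,∞) with ∫₀¹ ξ''(t) γ(t) dt < ∞. Define P(γ) := inf_{L ≥ ∫₀¹ γ(s) ds} ½ ∫₀¹ ( ξ''(t) Γ(t) + 1/Γ(t) ) dt with Γ(t) = L − ∫₀ᵗ γ(s) ds (convention 1/0 = +∞). Then inf_{γ ∈ ℒ} P(γ) = ∫₀¹ √( ξ''(t) ) dt. -/
open MeasureTheory ProbabilityTheory Filter
open scoped ENNReal NNReal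

noncomputable section

/-- The space `ℒ`: measurable non-negative functions on `[0,1)` with `∫₀¹ ξ''(t)γ(t) dt < ∞`. -/
def calL (P : ℕ) (c : ℕ → ℝ) : Set (ℝ → ℝ) :=
  {γ | Measurable γ ∧ (∀ t ∈ Set.Ico (0 : ℝ) 1, 0 ≤ γ t) ∧
    (∫⁻ t in Set.Ioo (0 : ℝ) 1, ENNReal.ofReal (xiD2 P c t * γ t)) < ⊤}

section StAux

lemma aux_xiD2_nonneg (P : ℕ) (c : ℕ → ℝ) {t : ℝ} (ht : 0 ≤ t) : 0 ≤ xiD2 P c t := by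
  refine Finset.sum_nonneg fun k hk => ?_
  have hk2 : (2:ℝ) ≤ (k:ℝ) := by exact_mod_cast (Finset.mem_Icc.1 hk).1
  have h1 : (0:ℝ) ≤ (k:ℝ) - 1 := by linarith
  positivity

lemma aux_xiD3_nonneg (P : ℕ) (c : ℕ → ℝ) {t : ℝ} (ht : 0 ≤ t) : 0 ≤ xiD3 P c t := by
  refine Finset.sum_nonneg fun k hk => ?_
  have hk2 : (2:ℝ) ≤ (k:ℝ) := by exact_mod_cast (Finset.mem_Icc.1 hk).1
  have h1 : (0:ℝ) ≤ (k:ℝ) - 1 := by linarith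
  have h2 : (0:ℝ) ≤ (k:ℝ) - 2 := by linarith
  positivity

lemma aux_xiD2_mono (P : ℕ) (c : ℕ → ℝ) {s t : ℝ} (hs : 0 ≤ s) (hst : s ≤ t) :
    xiD2 P c s ≤ xiD2 P c t := by
  refine Finset.sum_le_sum fun k hk => ?_
  have hk2 : (2:ℝ) ≤ (k:ℝ) := by exact_mod_cast (Finset.mem_Icc.1 hk).1
  have h1 : (0:ℝ) ≤ (k:ℝ) - 1 := by linarith
  exact mul_le_mul_of_nonneg_left (pow_le_pow_left₀ hs hst _) (by positivity)

lemma aux_xiD3_mono (P : ℕ) (c : ℕ → ℝ) {s t : ℝ} (hs : 0 ≤ s) (hst : s ≤ t) :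
    xiD3 P c s ≤ xiD3 P c t := by
  refine Finset.sum_le_sum fun k hk => ?_
  have hk2 : (2:ℝ) ≤ (k:ℝ) := by exact_mod_cast (Finset.mem_Icc.1 hk).1
  have h1 : (0:ℝ) ≤ (k:ℝ) - 1 := by linarith
  have h2 : (0:ℝ) ≤ (k:ℝ) - 2 := by linarith
  exact mul_le_mul_of_nonneg_left (pow_le_pow_left₀ hs hst _) (by positivity)

lemma aux_xiD2_pos (P : ℕ) (c : ℕ → ℝ) (hc : ∃ k ∈ Finset.Icc 2 P, c k ≠ 0) {t : ℝ}
    (ht : 0 < t) : 0 < xiD2 P c t := by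
  obtain ⟨k0, hk0, hck0⟩ := hc
  refine Finset.sum_pos' (fun k hk => ?_) ⟨k0, hk0, ?_⟩
  · have hk2 : (2:ℝ) ≤ (k:ℝ) := by exact_mod_cast (Finset.mem_Icc.1 hk).1
    have h1 : (0:ℝ) ≤ (k:ℝ) - 1 := by linarith
    positivity
  · have hk2 : (2:ℝ) ≤ (k0:ℝ) := by exact_mod_cast (Finset.mem_Icc.1 hk0).1
    have h1 : (0:ℝ) < (k0:ℝ) - 1 := by linarith
    positivity

lemma aux_xiD2_cont (P : ℕ) (c : ℕ → ℝ) : Continuous (xiD2 P c) := by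
  unfold xiD2
  exact continuous_finset_sum _ fun k _ => continuous_const.mul (continuous_pow _)

lemma aux_xiD3_cont (P : ℕ) (c : ℕ → ℝ) : Continuous (xiD3 P c) := by
  unfold xiD3
  exact continuous_finset_sum _ fun k _ => continuous_const.mul (continuous_pow _)

lemma aux_hasDerivAt_xiD2 (P : ℕ) (c : ℕ → ℝ) (t : ℝ) :
    HasDerivAt (xiD2 P c) (xiD3 P c t) t := by
  unfold xiD2 xiD3
  refine HasDerivAt.fun_sum fun k hk => ?_
  have hk2 : 2 ≤ k := (Finset.mem_Icc.1 hk).1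
  have h := (hasDerivAt_pow (k - 2) t).const_mul ((k:ℝ) * ((k:ℝ) - 1) * c k ^ 2)
  convert h using 1
  · rfl
  have h2 : ((k - 2 : ℕ) : ℝ) = (k:ℝ) - 2 := by
    push_cast [Nat.cast_sub hk2]; ring
  have h3 : k - 2 - 1 = k - 3 := by omega
  rw [h3, h2]
  ring

lemma aux_lint_Ioo {a b : ℝ} (g : ℝ → ℝ) (hg : MeasureTheory.IntegrableOn g (Set.Ioo a b))
    (hnn : ∀ s ∈ Set.Ioo a b, 0 ≤ g s) :
    ∫⁻ s in Set.Ioo a b, ENNReal.ofReal (g s) = ENNReal.ofReal (∫ s in Set.Ioo a b, g s) :=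
  (MeasureTheory.ofReal_integral_eq_lintegral_ofReal hg
    ((MeasureTheory.ae_restrict_iff' measurableSet_Ioo).2 (MeasureTheory.ae_of_all _ hnn))).symm

end StAux
/-- the extended Parisi variational principle over `ℒ` has value
`ALG = ∫₀¹ √(ξ''(t)) dt`. -/
theorem statement_15 (P : ℕ) (hP : 2 ≤ P) (c : ℕ → ℝ)
    (hc : ∃ k ∈ Finset.Icc 2 P, c k ≠ 0) :
    (⨅ γ ∈ calL P c, PFunE P c γ)
      = ENNReal.ofReal (∫ t in Set.Ioo (0 : ℝ) 1, Real.sqrt (xiD2 P c t)) := by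
  set A : ℝ → ℝ := xiD2 P c with hAdef
  set ALG : ℝ := ∫ t in Set.Ioo (0:ℝ) 1, Real.sqrt (A t) with hALGdef
  have contA : Continuous A := aux_xiD2_cont P c
  have hApos : ∀ t : ℝ, 0 < t → 0 < A t := fun t ht => aux_xiD2_pos P c hc ht
  have hA0 : ∀ t : ℝ, 0 ≤ t → 0 ≤ A t := fun t ht => aux_xiD2_nonneg P c ht
  have contS : Continuous fun t => Real.sqrt (A t) := Real.continuous_sqrt.comp contA
  have hSint : MeasureTheory.IntegrableOn (fun t => Real.sqrt (A t)) (Set.Ioo (0:ℝ) 1) :=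
    (contS.integrableOn_Icc (a := 0) (b := 1)).mono_set Set.Ioo_subset_Icc_self
  have hALGnn : 0 ≤ ALG :=
    MeasureTheory.setIntegral_nonneg measurableSet_Ioo fun t _ => Real.sqrt_nonneg _
  -- Lower bound
  have hlow : ENNReal.ofReal ALG ≤ ⨅ γ ∈ calL P c, PFunE P c γ := by
    refine le_iInf₂ fun γ _ => ?_
    unfold PFunE
    refine le_iInf₂ fun L _ => ?_
    rw [ENNReal.le_div_iff_mul_le (Or.inl two_ne_zero) (Or.inl ENNReal.ofNat_ne_top)]
    have key : ∫⁻ t in Set.Ioo (0:ℝ) 1, ENNReal.ofReal (2 * Real.sqrt (A t))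
        ≤ ∫⁻ t in Set.Ioo (0:ℝ) 1,
          (ENNReal.ofReal (xiD2 P c t * (L - (gammaLInt γ t).toReal))
            + (ENNReal.ofReal (L - (gammaLInt γ t).toReal))⁻¹) := by
      refine MeasureTheory.lintegral_mono_ae
        ((MeasureTheory.ae_restrict_iff' measurableSet_Ioo).2
          (MeasureTheory.ae_of_all _ fun t ht => ?_))
      set Γ : ℝ := L - (gammaLInt γ t).toReal with hΓ
      rcases le_or_gt Γ 0 with h | h
      · have h0 : (ENNReal.ofReal Γ)⁻¹ = ⊤ := by
          rw [ENNReal.ofReal_eq_zero.2 h]; simp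
        rw [h0]
        simp
      · have hAt : 0 < A t := hApos t ht.1
        have h1 : (ENNReal.ofReal Γ)⁻¹ = ENNReal.ofReal Γ⁻¹ :=
          (ENNReal.ofReal_inv_of_pos h).symm
        have hAΓ : 0 ≤ xiD2 P c t * Γ := mul_nonneg hAt.le h.le
        rw [h1, ← ENNReal.ofReal_add hAΓ (inv_nonneg.2 h.le)]
        apply ENNReal.ofReal_le_ofReal
        have hs := Real.sq_sqrt hAt.le
        have hg := Real.sq_sqrt h.le
        have hgp : 0 < Real.sqrt Γ := Real.sqrt_pos.2 h
        have hcan : Real.sqrt Γ * (Real.sqrt Γ)⁻¹ = 1 := mul_inv_cancel₀ hgp.ne'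
        have hx2 : (Real.sqrt (A t) * Real.sqrt Γ) ^ 2 = A t * Γ := by
          rw [mul_pow, hs, hg]
        have hxy : Real.sqrt (A t) * Real.sqrt Γ * (Real.sqrt Γ)⁻¹ = Real.sqrt (A t) := by
          rw [mul_assoc, hcan, mul_one]
        have hy2 : ((Real.sqrt Γ)⁻¹) ^ 2 = Γ⁻¹ := by rw [inv_pow, hg]
        have hAA : xiD2 P c t = A t := rfl
        rw [hAA]
        nlinarith [sq_nonneg (Real.sqrt (A t) * Real.sqrt Γ - (Real.sqrt Γ)⁻¹), hx2, hxy, hy2]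
    refine le_trans ?_ key
    rw [aux_lint_Ioo _ (hSint.const_mul 2) (fun s _ => by positivity),
      MeasureTheory.integral_const_mul, ← hALGdef,
      ENNReal.ofReal_mul (by norm_num : (0:ℝ) ≤ 2), ENNReal.ofReal_ofNat, mul_comm]
  -- Upper bound
  have hupper : (⨅ γ ∈ calL P c, PFunE P c γ) ≤ ENNReal.ofReal ALG := by
    refine ENNReal.le_of_forall_pos_le_add fun δ hδ _ => ?_
    set S1 : ℝ := Real.sqrt (A 1) with hS1def
    have hS1nn : 0 ≤ S1 := Real.sqrt_nonneg _
    set ε : ℝ := min (1/2) ((δ:ℝ) / (S1 + 1)) with hεdef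
    have hδR : (0:ℝ) < δ := hδ
    have hε0 : 0 < ε := lt_min (by norm_num) (div_pos hδR (by positivity))
    have hε1 : ε < 1 := lt_of_le_of_lt (min_le_left _ _) (by norm_num)
    have hεδ : ε * S1 ≤ (δ:ℝ) := by
      have h1 : ε * S1 ≤ ((δ:ℝ) / (S1 + 1)) * S1 :=
        mul_le_mul_of_nonneg_right (min_le_right _ _) hS1nn
      have h2 : ((δ:ℝ) / (S1 + 1)) * S1 ≤ (δ:ℝ) := by
        rw [div_mul_eq_mul_div, div_le_iff₀ (by positivity)]
        nlinarith
      linarith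
    have hAε : 0 < A ε := hApos ε hε0
    have hsAε : 0 < Real.sqrt (A ε) := Real.sqrt_pos.2 hAε
    set γ0 : ℝ → ℝ := fun s => xiD3 P c s / (2 * A s * Real.sqrt (A s)) with hγ0def
    set γ : ℝ → ℝ := fun s => if s ≤ ε then 0 else γ0 s with hγdef
    set L0 : ℝ := (Real.sqrt (A ε))⁻¹ with hL0def
    have hγ0nn : ∀ s : ℝ, 0 ≤ s → 0 ≤ γ0 s := fun s hs => by
      have hAs := hA0 s hs
      have hss := Real.sqrt_nonneg (A s)
      exact div_nonneg (aux_xiD3_nonneg P c hs) (by positivity)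
    have hγnn : ∀ s : ℝ, 0 ≤ γ s := by
      intro s
      by_cases h : s ≤ ε
      · simp [hγdef, h]
      · simp only [hγdef, if_neg h]
        exact hγ0nn s (le_of_lt (lt_of_lt_of_le hε0 (le_of_not_ge h)))
    have hγ0cont : ContinuousOn γ0 (Set.Icc ε 1) := by
      refine ContinuousOn.div (aux_xiD3_cont P c).continuousOn
        ((continuous_const.mul contA).mul (Real.continuous_sqrt.comp contA)).continuousOn
        fun s hs => ?_
      have : 0 < A s := hApos s (lt_of_lt_of_le hε0 hs.1)
      have : 0 < Real.sqrt (A s) := Real.sqrt_pos.2 this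
      positivity
    -- FTC
    have hFTC : ∀ t ∈ Set.Ioc ε 1, ∫ s in Set.Ioo ε t, γ0 s
        = (Real.sqrt (A ε))⁻¹ - (Real.sqrt (A t))⁻¹ := by
      intro t ht
      have huIcc : Set.uIcc ε t = Set.Icc ε t := Set.uIcc_of_le ht.1.le
      have hderiv : ∀ s ∈ Set.uIcc ε t,
          HasDerivAt (fun u => -(Real.sqrt (A u))⁻¹) (γ0 s) s := by
        intro s hs
        rw [huIcc] at hs
        have hAs : 0 < A s := hApos s (lt_of_lt_of_le hε0 hs.1)
        have hsAs : 0 < Real.sqrt (A s) := Real.sqrt_pos.2 hAs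
        have h1 : HasDerivAt A (xiD3 P c s) s := aux_hasDerivAt_xiD2 P c s
        have h2 := (h1.sqrt hAs.ne').inv hsAs.ne'
        have h3 := h2.neg
        have heq : -(-(xiD3 P c s / (2 * Real.sqrt (A s))) / Real.sqrt (A s) ^ 2)
            = γ0 s := by
          rw [neg_div, neg_neg, div_div, Real.sq_sqrt hAs.le]
          show _ = xiD3 P c s / (2 * A s * Real.sqrt (A s))
          ring_nf
        exact heq ▸ h3
      have hint : IntervalIntegrable γ0 MeasureTheory.volume ε t :=
        (hγ0cont.mono (Set.Icc_subset_Icc le_rfl ht.2)).intervalIntegrable_of_Icc ht.1.le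
      rw [← MeasureTheory.integral_Ioc_eq_integral_Ioo,
        ← intervalIntegral.integral_of_le ht.1.le,
        intervalIntegral.integral_eq_sub_of_hasDerivAt hderiv hint]
      ring
    have hγ0int : ∀ t ∈ Set.Ioc ε 1, MeasureTheory.IntegrableOn γ0 (Set.Ioo ε t) := by
      intro t ht
      exact ((hγ0cont.mono (Set.Icc_subset_Icc le_rfl ht.2)).integrableOn_compact
        isCompact_Icc).mono_set Set.Ioo_subset_Icc_self
    -- value of gammaLInt
    have hG0 : ∀ t : ℝ, t ≤ ε → gammaLInt γ t = 0 := by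
      intro t ht
      unfold gammaLInt
      rw [MeasureTheory.setLIntegral_congr_fun measurableSet_Ioo
        (fun s hs => ?_), MeasureTheory.lintegral_zero]
      show ENNReal.ofReal (γ s) = 0
      have : s ≤ ε := le_trans hs.2.le ht
      simp [hγdef, this]
    have hGint : ∀ t ∈ Set.Ioc ε 1, gammaLInt γ t
        = ENNReal.ofReal ((Real.sqrt (A ε))⁻¹ - (Real.sqrt (A t))⁻¹) := by
      intro t ht
      unfold gammaLInt
      have hsplit : Set.Ioo (0:ℝ) t = Set.Ioc 0 ε ∪ Set.Ioo ε t :=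
        (Set.Ioc_union_Ioo_eq_Ioo hε0.le ht.1).symm
      have hdisj : Disjoint (Set.Ioc (0:ℝ) ε) (Set.Ioo ε t) := by
        refine Set.disjoint_left.2 fun x hx hx' => ?_
        exact absurd hx.2 (not_le.2 hx'.1)
      rw [hsplit, MeasureTheory.lintegral_union measurableSet_Ioo hdisj]
      have h1 : ∫⁻ s in Set.Ioc (0:ℝ) ε, ENNReal.ofReal (γ s) = 0 := by
        rw [MeasureTheory.setLIntegral_congr_fun measurableSet_Ioc
          (fun s hs => ?_), MeasureTheory.lintegral_zero]
        show ENNReal.ofReal (γ s) = 0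
        simp [hγdef, hs.2]
      have h2 : ∫⁻ s in Set.Ioo ε t, ENNReal.ofReal (γ s)
          = ∫⁻ s in Set.Ioo ε t, ENNReal.ofReal (γ0 s) := by
        refine MeasureTheory.setLIntegral_congr_fun measurableSet_Ioo
          (fun s hs => ?_)
        simp [hγdef, not_le.2 hs.1]
      rw [h1, h2, zero_add,
        aux_lint_Ioo _ (hγ0int t ht) (fun s hs => hγ0nn s (lt_of_lt_of_le hε0 hs.1.le).le),
        hFTC t ht]
    -- membership in calL
    have hγ0meas : Measurable γ0 :=
      (aux_xiD3_cont P c).measurable.div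
        (((continuous_const.mul contA).mul (Real.continuous_sqrt.comp contA)).measurable)
    have hγmeas : Measurable γ := Measurable.ite
      (measurableSet_le measurable_id measurable_const) measurable_const hγ0meas
    set M : ℝ := xiD3 P c 1 / (2 * A ε * Real.sqrt (A ε)) with hMdef
    have hMnn : 0 ≤ M := div_nonneg (aux_xiD3_nonneg P c (by norm_num)) (by positivity)
    have hγle : ∀ t ∈ Set.Ioo (0:ℝ) 1, γ t ≤ M := by
      intro t ht
      by_cases h : t ≤ ε
      · simpa [hγdef, h] using hMnn
      · push_neg at h
        simp only [hγdef, if_neg (not_le.2 h)]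
        have hAt : 0 < A t := hApos t ht.1
        have hAεt : A ε ≤ A t := aux_xiD2_mono P c hε0.le h.le
        have hsle : Real.sqrt (A ε) ≤ Real.sqrt (A t) := Real.sqrt_le_sqrt hAεt
        refine div_le_div₀ (aux_xiD3_nonneg P c (by norm_num))
          (aux_xiD3_mono P c ht.1.le ht.2.le) (by positivity) ?_
        have : 0 < Real.sqrt (A ε) := hsAε
        nlinarith [Real.sqrt_nonneg (A t), hAε]
    have hfin : (∫⁻ t in Set.Ioo (0:ℝ) 1, ENNReal.ofReal (xiD2 P c t * γ t)) < ⊤ := by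
      have hb : ∀ t ∈ Set.Ioo (0:ℝ) 1,
          ENNReal.ofReal (xiD2 P c t * γ t) ≤ ENNReal.ofReal (A 1 * M) := by
        intro t ht
        refine ENNReal.ofReal_le_ofReal ?_
        have h1 : A t ≤ A 1 := aux_xiD2_mono P c ht.1.le ht.2.le
        have h2 := hγle t ht
        have h3 := hγnn t
        have h4 := hA0 t ht.1.le
        exact mul_le_mul h1 h2 h3 (le_trans h4 h1)
      calc (∫⁻ t in Set.Ioo (0:ℝ) 1, ENNReal.ofReal (xiD2 P c t * γ t))
          ≤ ∫⁻ _ in Set.Ioo (0:ℝ) 1, ENNReal.ofReal (A 1 * M) :=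
            MeasureTheory.lintegral_mono_ae
              ((MeasureTheory.ae_restrict_iff' measurableSet_Ioo).2
                (MeasureTheory.ae_of_all _ hb))
        _ = ENNReal.ofReal (A 1 * M) * MeasureTheory.volume (Set.Ioo (0:ℝ) 1) :=
            MeasureTheory.setLIntegral_const _ _
        _ < ⊤ := by
            rw [Real.volume_Ioo]
            exact ENNReal.mul_lt_top ENNReal.ofReal_lt_top ENNReal.ofReal_lt_top
    have hmem : γ ∈ calL P c := ⟨hγmeas, fun t _ => hγnn t, hfin⟩
    have hL0mem : L0 ∈ {L : ℝ | gammaLInt γ 1 ≤ ENNReal.ofReal L} := by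
      rw [Set.mem_setOf_eq, hGint 1 ⟨hε1, le_refl 1⟩]
      exact ENNReal.ofReal_le_ofReal (sub_le_self _ (inv_nonneg.2 (Real.sqrt_nonneg _)))
    -- the value of Γ
    have hptΓ : ∀ t ∈ Set.Ioo (0:ℝ) 1,
        L0 - (gammaLInt γ t).toReal = (Real.sqrt (A (max t ε)))⁻¹ := by
      intro t ht
      by_cases h : t ≤ ε
      · rw [hG0 t h, ENNReal.toReal_zero, sub_zero, max_eq_right h]
      · push_neg at h
        have hAt : 0 < A t := hApos t ht.1
        have hsle : Real.sqrt (A ε) ≤ Real.sqrt (A t) :=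
          Real.sqrt_le_sqrt (aux_xiD2_mono P c hε0.le h.le)
        have hinv : (Real.sqrt (A t))⁻¹ ≤ (Real.sqrt (A ε))⁻¹ :=
          inv_anti₀ hsAε hsle
        rw [hGint t ⟨h, ht.2.le⟩, ENNReal.toReal_ofReal (by linarith), max_eq_left h.le]
        ring
    -- pointwise bound on the integrand
    have hpt : ∀ t ∈ Set.Ioo (0:ℝ) 1,
        ENNReal.ofReal (xiD2 P c t * (L0 - (gammaLInt γ t).toReal))
          + (ENNReal.ofReal (L0 - (gammaLInt γ t).toReal))⁻¹
        ≤ ENNReal.ofReal (2 * Real.sqrt (A (max t ε))) := by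
      intro t ht
      rw [hptΓ t ht]
      have hAm : 0 < A (max t ε) := hApos _ (lt_max_of_lt_right hε0)
      have hsm : 0 < Real.sqrt (A (max t ε)) := Real.sqrt_pos.2 hAm
      rw [ENNReal.ofReal_inv_of_pos hsm, inv_inv]
      rw [← ENNReal.ofReal_add (mul_nonneg (hA0 t ht.1.le) (inv_nonneg.2 hsm.le)) hsm.le]
      refine ENNReal.ofReal_le_ofReal ?_
      have hAle : A t ≤ A (max t ε) := aux_xiD2_mono P c ht.1.le (le_max_left _ _)
      have h1 : xiD2 P c t * (Real.sqrt (A (max t ε)))⁻¹ ≤ Real.sqrt (A (max t ε)) := by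
        have h2 : A (max t ε) * (Real.sqrt (A (max t ε)))⁻¹ = Real.sqrt (A (max t ε)) := by
          field_simp
          rw [Real.sq_sqrt hAm.le]
        calc xiD2 P c t * (Real.sqrt (A (max t ε)))⁻¹
            ≤ A (max t ε) * (Real.sqrt (A (max t ε)))⁻¹ :=
              mul_le_mul_of_nonneg_right hAle (inv_nonneg.2 (Real.sqrt_nonneg _))
          _ = Real.sqrt (A (max t ε)) := h2
      linarith
    -- main integral estimate
    have hI : (∫⁻ t in Set.Ioo (0:ℝ) 1,
        (ENNReal.ofReal (xiD2 P c t * (L0 - (gammaLInt γ t).toReal))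
          + (ENNReal.ofReal (L0 - (gammaLInt γ t).toReal))⁻¹))
        ≤ (ENNReal.ofReal ALG + (δ : ℝ≥0∞)) * 2 := by
      have step1 : (∫⁻ t in Set.Ioo (0:ℝ) 1,
          (ENNReal.ofReal (xiD2 P c t * (L0 - (gammaLInt γ t).toReal))
            + (ENNReal.ofReal (L0 - (gammaLInt γ t).toReal))⁻¹))
          ≤ ∫⁻ t in Set.Ioo (0:ℝ) 1, ENNReal.ofReal (2 * Real.sqrt (A (max t ε))) :=
        MeasureTheory.lintegral_mono_ae
          ((MeasureTheory.ae_restrict_iff' measurableSet_Ioo).2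
            (MeasureTheory.ae_of_all _ hpt))
      have hsplit : Set.Ioo (0:ℝ) 1 = Set.Ioc 0 ε ∪ Set.Ioo ε 1 :=
        (Set.Ioc_union_Ioo_eq_Ioo hε0.le hε1).symm
      have hdisj : Disjoint (Set.Ioc (0:ℝ) ε) (Set.Ioo ε 1) :=
        Set.disjoint_left.2 fun x hx hx' => absurd hx.2 (not_le.2 hx'.1)
      have step2 : ∫⁻ t in Set.Ioo (0:ℝ) 1, ENNReal.ofReal (2 * Real.sqrt (A (max t ε)))
          ≤ ENNReal.ofReal (2 * (δ:ℝ)) + ENNReal.ofReal (2 * ALG) := by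
        rw [hsplit, MeasureTheory.lintegral_union measurableSet_Ioo hdisj]
        refine add_le_add ?_ ?_
        · -- on (0, ε]
          have hb : ∀ s ∈ Set.Ioc (0:ℝ) ε,
              ENNReal.ofReal (2 * Real.sqrt (A (max s ε))) = ENNReal.ofReal (2 * Real.sqrt (A ε)) := by
            intro s hs
            rw [max_eq_right hs.2]
          rw [MeasureTheory.setLIntegral_congr_fun measurableSet_Ioc
            hb]
          rw [MeasureTheory.setLIntegral_const, Real.volume_Ioc]
          rw [← ENNReal.ofReal_mul (by positivity)]
          refine ENNReal.ofReal_le_ofReal ?_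
          have hsA1 : Real.sqrt (A ε) ≤ S1 := Real.sqrt_le_sqrt (aux_xiD2_mono P c hε0.le hε1.le)
          have : (2 * Real.sqrt (A ε)) * (ε - 0) ≤ 2 * (ε * S1) := by
            rw [sub_zero]
            nlinarith [hε0.le]
          nlinarith
        · -- on (ε, 1)
          have hb : ∀ s ∈ Set.Ioo ε (1:ℝ),
              ENNReal.ofReal (2 * Real.sqrt (A (max s ε))) = ENNReal.ofReal (2 * Real.sqrt (A s)) := by
            intro s hs
            rw [max_eq_left hs.1.le]
          rw [MeasureTheory.setLIntegral_congr_fun measurableSet_Ioo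
            hb]
          have hintεs : MeasureTheory.IntegrableOn (fun s => 2 * Real.sqrt (A s)) (Set.Ioo ε 1) :=
            MeasureTheory.IntegrableOn.mono_set (hSint.const_mul 2) (Set.Ioo_subset_Ioo hε0.le le_rfl)
          rw [aux_lint_Ioo _ hintεs (fun s _ => by positivity)]
          refine ENNReal.ofReal_le_ofReal ?_
          have hmono : (∫ s in Set.Ioo ε 1, 2 * Real.sqrt (A s))
              ≤ ∫ s in Set.Ioo (0:ℝ) 1, 2 * Real.sqrt (A s) := by
            refine MeasureTheory.setIntegral_mono_set (hSint.const_mul 2) ?_ ?_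
            · exact (MeasureTheory.ae_restrict_iff' measurableSet_Ioo).2
                (MeasureTheory.ae_of_all _ fun s _ => by positivity)
            · exact (Set.Ioo_subset_Ioo hε0.le le_rfl).eventuallyLE
          simp only [MeasureTheory.integral_const_mul] at hmono ⊢
          rw [hALGdef]
          linarith
      refine le_trans (le_trans step1 step2) ?_
      have h2δ : ENNReal.ofReal (2 * (δ:ℝ)) ≤ (δ : ℝ≥0∞) * 2 := by
        rw [ENNReal.ofReal_mul (by norm_num : (0:ℝ) ≤ 2), ENNReal.ofReal_coe_nnreal]
        rw [mul_comm]
        simp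
      have h2A : ENNReal.ofReal (2 * ALG) = ENNReal.ofReal ALG * 2 := by
        rw [ENNReal.ofReal_mul (by norm_num : (0:ℝ) ≤ 2), mul_comm]
        simp
      rw [h2A]
      calc ENNReal.ofReal (2 * (δ:ℝ)) + ENNReal.ofReal ALG * 2
          ≤ (δ : ℝ≥0∞) * 2 + ENNReal.ofReal ALG * 2 := add_le_add h2δ le_rfl
        _ = (ENNReal.ofReal ALG + (δ : ℝ≥0∞)) * 2 := by ring
    calc (⨅ γ ∈ calL P c, PFunE P c γ) ≤ PFunE P c γ := iInf₂_le γ hmem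
      _ ≤ (∫⁻ t in Set.Ioo (0:ℝ) 1,
            (ENNReal.ofReal (xiD2 P c t * (L0 - (gammaLInt γ t).toReal))
              + (ENNReal.ofReal (L0 - (gammaLInt γ t).toReal))⁻¹)) / 2 := by
          unfold PFunE
          exact iInf₂_le L0 hL0mem
      _ ≤ ENNReal.ofReal ALG + (δ : ℝ≥0∞) := ENNReal.div_le_of_le_mul hI
  exact le_antisymm hupper hlow
end
end
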